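/- Consider the ReLU network T with weight matrices W_1, …, W_L, each having positive ℓ²-operator norm ‖W_i‖₂ > 0. Let x ∈ ℝ^{n_0} be such that every hidden pre-activation is nonzero: (W_l h_{l−1}(x))_k ≠ 0 for all 1 ≤ l ≤ L−1 and all k. Define r(x) = min over all 1 ≤ l ≤ L−1 and all k of |(W_l h_{l−1}(x))_k| / ∏_{i=1}^{l} ‖W_i‖₂. Then r(x) > 0, and for every x' ∈ ℝ^{n_0} with ‖x − x'‖ < r(x): the activation patterns agree, τ_l(x') = τ_l(x) for all l = 1, …, L−1, and consequently T(x) − T(x') = W_L D_{L−1} W_{L−1} ⋯ D_1 W_1 (x − x'), where D_l = D_l(x). In other words, T agrees with a fixed linear map on the open ball of radius r(x) around x. -/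

import Mathlib

noncomputable section
open scoped Classical

/-- Coordinatewise ReLU on Euclidean space. -/
def relu {d : ℕ} (v : EuclideanSpace ℝ (Fin d)) : EuclideanSpace ℝ (Fin d) :=
  WithLp.toLp 2 (fun i => max (v i) 0)

/-- Hidden activations of the ReLU network: `netAct W 0 x = x`,
`netAct W (l+1) x = ReLU(W_l · netAct W l x)` (so `netAct W l` is the paper's `h_l`,
with `W l` the paper's `W_{l+1}`). -/
def netAct {n : ℕ → ℕ} (W : ∀ l : ℕ, Matrix (Fin (n (l + 1))) (Fin (n l)) ℝ) :
    (l : ℕ) → EuclideanSpace ℝ (Fin (n 0)) → EuclideanSpace ℝ (Fin (n l))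
  | 0 => fun x => x
  | l + 1 => fun x => relu (WithLp.toLp 2 ((W l).mulVec (netAct W l x)))

/-- The ReLU network with `L` weight layers: `T x = W_L · h_{L-1}(x)`. -/
def netT {n : ℕ → ℕ} (W : ∀ l : ℕ, Matrix (Fin (n (l + 1))) (Fin (n l)) ℝ) (L : ℕ)
    (x : EuclideanSpace ℝ (Fin (n 0))) : EuclideanSpace ℝ (Fin (n (L - 1 + 1))) :=
  WithLp.toLp 2 ((W (L - 1)).mulVec (netAct W (L - 1) x))

/-- The 0/1 activation pattern of `x` at hidden layer `l+1` (the paper's `τ_{l+1}(x)`). -/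
def actPattern {n : ℕ → ℕ} (W : ∀ l : ℕ, Matrix (Fin (n (l + 1))) (Fin (n l)) ℝ)
    (x : EuclideanSpace ℝ (Fin (n 0))) (l : ℕ) : Fin (n (l + 1)) → ℝ :=
  fun k => if 0 < (W l).mulVec (netAct W l x) k then 1 else 0

/-- The linearized network `x' ↦ D_l W_l ⋯ D_1 W_1 x'` for diagonal matrices
`D_l = diag(d l)`. -/
def linAct {n : ℕ → ℕ} (W : ∀ l : ℕ, Matrix (Fin (n (l + 1))) (Fin (n l)) ℝ)
    (d : ∀ l : ℕ, Fin (n (l + 1)) → ℝ) :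
    (l : ℕ) → EuclideanSpace ℝ (Fin (n 0)) → EuclideanSpace ℝ (Fin (n l))
  | 0 => fun x => x
  | l + 1 => fun x => WithLp.toLp 2 ((Matrix.diagonal (d l)).mulVec ((W l).mulVec (linAct W d l x)))


/-- ℓ²→ℓ² operator norm (largest singular value) of a matrix. -/
def l2OpNorm {a b : ℕ} (W : Matrix (Fin a) (Fin b) ℝ) : ℝ :=
  ‖LinearMap.toContinuousLinearMap (Matrix.toEuclideanLin W)‖

def toE {a : ℕ} (v : Fin a → ℝ) : EuclideanSpace ℝ (Fin a) := WithLp.toLp 2 v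

lemma coord_le_norm' {d : ℕ} (v : EuclideanSpace ℝ (Fin d)) (k : Fin d) : |v k| ≤ ‖v‖ := by
  rw [EuclideanSpace.norm_eq]
  have h1 : |v k| = Real.sqrt (‖v k‖ ^ 2) := by
    rw [Real.sqrt_sq_eq_abs, abs_norm, Real.norm_eq_abs]
  rw [h1]
  apply Real.sqrt_le_sqrt
  exact Finset.single_le_sum (f := fun i => ‖v i‖ ^ 2) (fun i _ => sq_nonneg _) (Finset.mem_univ k)

lemma mulVec_norm_le' {a b : ℕ} (W : Matrix (Fin a) (Fin b) ℝ) (v : EuclideanSpace ℝ (Fin b)) :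
    ‖toE (W.mulVec v)‖ ≤ l2OpNorm W * ‖v‖ :=
  (LinearMap.toContinuousLinearMap (Matrix.toEuclideanLin W)).le_opNorm v

lemma diag_norm_le' {a : ℕ} (d : Fin a → ℝ) (hd : ∀ k, d k = 0 ∨ d k = 1)
    (u : EuclideanSpace ℝ (Fin a)) :
    ‖toE ((Matrix.diagonal d).mulVec u)‖ ≤ ‖u‖ := by
  rw [EuclideanSpace.norm_eq, EuclideanSpace.norm_eq]
  apply Real.sqrt_le_sqrt
  apply Finset.sum_le_sum
  intro k _
  have h2 : toE ((Matrix.diagonal d).mulVec u) k = d k * u k := Matrix.mulVec_diagonal d u k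
  rw [h2]
  rcases hd k with h | h <;> simp [h]
  positivity

lemma toE_mulVec_sub {a b : ℕ} (M : Matrix (Fin a) (Fin b) ℝ) (u v : EuclideanSpace ℝ (Fin b)) :
    toE (M.mulVec u) - toE (M.mulVec v) = toE (M.mulVec (u - v)) :=
  (congrArg toE (Matrix.mulVec_sub M u v)).symm

lemma toE_sub_apply {a : ℕ} (u v : Fin a → ℝ) (k : Fin a) :
    (toE u - toE v) k = u k - v k := rfl


/-- paper's Lemma 3.3: if every hidden pre-activation of `x` is nonzero,
then with `r(x) = min_{l,k} |(W_l h_{l-1}(x))_k| / ∏_{i ≤ l} ‖W_i‖₂` one has `r(x) > 0`,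
and every `x'` with `‖x − x'‖ < r(x)` has the same activation pattern as `x` at all hidden
layers, so that `T(x) − T(x') = W_L D_{L-1} W_{L-1} ⋯ D_1 W_1 (x − x')`:  the ReLU network
agrees with a fixed linear map on the open ball of radius `r(x)` around `x`. -/
theorem stmt8 {n : ℕ → ℕ} (L : ℕ) (hL : 2 ≤ L)
    (W : ∀ l : ℕ, Matrix (Fin (n (l + 1))) (Fin (n l)) ℝ)
    (hWpos : ∀ l < L, 0 < l2OpNorm (W l))
    (x : EuclideanSpace ℝ (Fin (n 0)))
    (hx : ∀ l < L - 1, ∀ k : Fin (n (l + 1)), (W l).mulVec (netAct W l x) k ≠ 0)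
    (r : ℝ)
    (hr : r = ⨅ q : Σ l : Fin (L - 1), Fin (n ((l : ℕ) + 1)),
      |(W (q.1 : ℕ)).mulVec (netAct W (q.1 : ℕ) x) q.2| /
        ∏ i ∈ Finset.range ((q.1 : ℕ) + 1), l2OpNorm (W i)) :
    0 < r ∧
    ∀ x' : EuclideanSpace ℝ (Fin (n 0)), ‖x - x'‖ < r →
      (∀ l < L - 1, ∀ k : Fin (n (l + 1)),
        (0 < (W l).mulVec (netAct W l x') k ↔ 0 < (W l).mulVec (netAct W l x) k)) ∧
      netT W L x - netT W L x' =
        (W (L - 1)).mulVec (linAct W (actPattern W x) (L - 1) (x - x')) := by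
  set d := actPattern W x with hd
  have hP : ∀ l ≤ L, (0:ℝ) < ∏ i ∈ Finset.range l, l2OpNorm (W i) := by
    intro l hl
    apply Finset.prod_pos
    intro i hi
    exact hWpos i (lt_of_lt_of_le (Finset.mem_range.mp hi) hl)
  have hn : ∀ l < L - 1, 0 < n (l + 1) := by
    intro l hl
    by_contra h
    push_neg at h
    have hzero : l2OpNorm (W l) = 0 := by
      have h0 : LinearMap.toContinuousLinearMap (Matrix.toEuclideanLin (W l)) = 0 := by
        ext v k
        exact absurd k.isLt (by omega)
      rw [l2OpNorm, h0, norm_zero]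
    exact absurd hzero (ne_of_gt (hWpos l (by omega)))
  haveI hne : Nonempty (Σ l : Fin (L - 1), Fin (n ((l : ℕ) + 1))) :=
    ⟨⟨⟨0, by omega⟩, ⟨0, hn 0 (by omega)⟩⟩⟩
  have hfpos : ∀ q : Σ l : Fin (L - 1), Fin (n ((l : ℕ) + 1)),
      (0:ℝ) < |(W (q.1 : ℕ)).mulVec (netAct W (q.1 : ℕ) x) q.2| /
        ∏ i ∈ Finset.range ((q.1 : ℕ) + 1), l2OpNorm (W i) := by
    intro q
    apply div_pos
    · exact abs_pos.mpr (hx q.1 q.1.isLt q.2)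
    · exact hP _ (by have := q.1.isLt; omega)
  have hrpos : 0 < r := by
    rw [hr]
    obtain ⟨q0, -, hq0⟩ := Finset.exists_min_image Finset.univ
      (fun q : Σ l : Fin (L - 1), Fin (n ((l : ℕ) + 1)) =>
        |(W (q.1 : ℕ)).mulVec (netAct W (q.1 : ℕ) x) q.2| /
          ∏ i ∈ Finset.range ((q.1 : ℕ) + 1), l2OpNorm (W i))
      ⟨Classical.arbitrary _, Finset.mem_univ _⟩
    exact lt_of_lt_of_le (hfpos q0) (le_ciInf fun q => hq0 q (Finset.mem_univ q))
  have hrle : ∀ l, ∀ hl : l < L - 1, ∀ k : Fin (n (l + 1)),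
      r * ∏ i ∈ Finset.range (l + 1), l2OpNorm (W i) ≤
        |(W l).mulVec (netAct W l x) k| := by
    intro l hl k
    have h1 : r ≤ |(W l).mulVec (netAct W l x) k| /
        ∏ i ∈ Finset.range (l + 1), l2OpNorm (W i) := by
      rw [hr]
      exact ciInf_le (Set.Finite.bddBelow (Set.finite_range _))
        (⟨⟨l, hl⟩, k⟩ : Σ l : Fin (L - 1), Fin (n ((l : ℕ) + 1)))
    exact (le_div_iff₀ (hP (l + 1) (by omega))).mp h1
  refine ⟨hrpos, ?_⟩
  intro x' hx'
  -- main induction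
  have key : ∀ l, l ≤ L - 1 →
      netAct W l x - netAct W l x' = linAct W d l (x - x') ∧
      ‖netAct W l x - netAct W l x'‖ ≤
        (∏ i ∈ Finset.range l, l2OpNorm (W i)) * ‖x - x'‖ ∧
      (l < L - 1 → ∀ k : Fin (n (l + 1)),
        (0 < (W l).mulVec (netAct W l x') k ↔ 0 < (W l).mulVec (netAct W l x) k)) := by
    intro l
    induction l with
    | zero =>
      intro _
      refine ⟨rfl, le_of_eq (by rw [show netAct W 0 x = x from rfl,
        show netAct W 0 x' = x' from rfl]; simp), ?_⟩
      intro hl0 k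
      -- layer 0 sign equivalence
      have hcoordb : |(W 0).mulVec (netAct W 0 x) k - (W 0).mulVec (netAct W 0 x') k| <
          |(W 0).mulVec (netAct W 0 x) k| := by
        have e1 : (W 0).mulVec (netAct W 0 x) k - (W 0).mulVec (netAct W 0 x') k =
            (toE ((W 0).mulVec (netAct W 0 x)) - toE ((W 0).mulVec (netAct W 0 x'))) k := rfl
        rw [e1]
        calc |(toE ((W 0).mulVec (netAct W 0 x)) - toE ((W 0).mulVec (netAct W 0 x'))) k|
            ≤ ‖toE ((W 0).mulVec (netAct W 0 x)) - toE ((W 0).mulVec (netAct W 0 x'))‖ :=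
              coord_le_norm' _ k
          _ = ‖toE ((W 0).mulVec (netAct W 0 x - netAct W 0 x'))‖ := by rw [toE_mulVec_sub]
          _ ≤ l2OpNorm (W 0) * ‖netAct W 0 x - netAct W 0 x'‖ := mulVec_norm_le' _ _
          _ = (∏ i ∈ Finset.range (0 + 1), l2OpNorm (W i)) * ‖x - x'‖ := by
              simp [netAct]
          _ < (∏ i ∈ Finset.range (0 + 1), l2OpNorm (W i)) * r :=
              mul_lt_mul_of_pos_left hx' (hP _ (by omega))
          _ ≤ |(W 0).mulVec (netAct W 0 x) k| := by
              have := hrle 0 hl0 k; linarith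
      have hnz := hx 0 hl0 k
      constructor
      · intro h'
        by_contra h0
        push_neg at h0
        have hneg : (W 0).mulVec (netAct W 0 x) k < 0 := lt_of_le_of_ne h0 hnz
        rw [abs_of_neg hneg] at hcoordb
        rcases abs_lt.mp hcoordb with ⟨ha, hb⟩
        linarith
      · intro h'
        rw [abs_of_pos h'] at hcoordb
        rcases abs_lt.mp hcoordb with ⟨ha, hb⟩
        linarith
    | succ l ih =>
      intro hl
      have hlt : l < L - 1 := by omega
      obtain ⟨ihEq, ihN, ihS⟩ := ih (by omega)
      have hsign := ihS hlt
      -- equality at l+1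
      have heq : netAct W (l + 1) x - netAct W (l + 1) x' = linAct W d (l + 1) (x - x') := by
        ext k
        have lhs : (netAct W (l + 1) x - netAct W (l + 1) x') k =
            max ((W l).mulVec (netAct W l x) k) 0 - max ((W l).mulVec (netAct W l x') k) 0 := rfl
        have rhs : linAct W d (l + 1) (x - x') k =
            d l k * ((W l).mulVec (linAct W d l (x - x'))) k := by
          show (Matrix.diagonal (d l)).mulVec _ k = _
          exact Matrix.mulVec_diagonal _ _ k
        have harg : (W l).mulVec (linAct W d l (x - x')) k =
            (W l).mulVec (netAct W l x) k - (W l).mulVec (netAct W l x') k := by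
          rw [← ihEq]
          have := toE_mulVec_sub (W l) (netAct W l x) (netAct W l x')
          calc (W l).mulVec (netAct W l x - netAct W l x') k
              = (toE ((W l).mulVec (netAct W l x)) - toE ((W l).mulVec (netAct W l x'))) k := by
                rw [this]; rfl
            _ = _ := rfl
        rw [lhs, rhs, harg]
        have hdlk : d l k = if 0 < (W l).mulVec (netAct W l x) k then 1 else 0 := rfl
        by_cases hc : 0 < (W l).mulVec (netAct W l x) k
        · have hc' : 0 < (W l).mulVec (netAct W l x') k := (hsign k).mpr hc
          rw [hdlk, if_pos hc, max_eq_left hc.le, max_eq_left hc'.le, one_mul]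
        · have hc' : ¬ 0 < (W l).mulVec (netAct W l x') k := fun h => hc ((hsign k).mp h)
          push_neg at hc hc'
          rw [hdlk, if_neg (not_lt.mpr hc), max_eq_right hc, max_eq_right hc', zero_mul, sub_zero]
      -- norm bound at l+1
      have hd01 : ∀ k, d l k = 0 ∨ d l k = 1 := by
        intro k
        by_cases hc : 0 < (W l).mulVec (netAct W l x) k
        · right; simp [hd, actPattern, hc]
        · left; simp [hd, actPattern, hc]
      have hN : ‖netAct W (l + 1) x - netAct W (l + 1) x'‖ ≤
          (∏ i ∈ Finset.range (l + 1), l2OpNorm (W i)) * ‖x - x'‖ := by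
        rw [heq]
        calc ‖linAct W d (l + 1) (x - x')‖
            = ‖toE ((Matrix.diagonal (d l)).mulVec ((W l).mulVec (linAct W d l (x - x'))))‖ := rfl
          _ ≤ ‖toE ((W l).mulVec (linAct W d l (x - x')))‖ := diag_norm_le' _ hd01 (toE ((W l).mulVec (linAct W d l (x - x'))))
          _ ≤ l2OpNorm (W l) * ‖linAct W d l (x - x')‖ := mulVec_norm_le' _ _
          _ = l2OpNorm (W l) * ‖netAct W l x - netAct W l x'‖ := by rw [← ihEq]
          _ ≤ l2OpNorm (W l) * ((∏ i ∈ Finset.range l, l2OpNorm (W i)) * ‖x - x'‖) :=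
              mul_le_mul_of_nonneg_left ihN (hWpos l (by omega)).le
          _ = (∏ i ∈ Finset.range (l + 1), l2OpNorm (W i)) * ‖x - x'‖ := by
              rw [Finset.prod_range_succ]; ring
      refine ⟨heq, hN, ?_⟩
      -- sign at l+1 (when l+1 < L-1)
      intro hl1 k
      have hcoordb : |(W (l+1)).mulVec (netAct W (l+1) x) k - (W (l+1)).mulVec (netAct W (l+1) x') k| <
          |(W (l+1)).mulVec (netAct W (l+1) x) k| := by
        have e1 : (W (l+1)).mulVec (netAct W (l+1) x) k - (W (l+1)).mulVec (netAct W (l+1) x') k =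
            (toE ((W (l+1)).mulVec (netAct W (l+1) x)) - toE ((W (l+1)).mulVec (netAct W (l+1) x'))) k := rfl
        rw [e1]
        calc |(toE ((W (l+1)).mulVec (netAct W (l+1) x)) - toE ((W (l+1)).mulVec (netAct W (l+1) x'))) k|
            ≤ ‖toE ((W (l+1)).mulVec (netAct W (l+1) x)) - toE ((W (l+1)).mulVec (netAct W (l+1) x'))‖ :=
              coord_le_norm' _ k
          _ = ‖toE ((W (l+1)).mulVec (netAct W (l+1) x - netAct W (l+1) x'))‖ := by
              rw [toE_mulVec_sub]
          _ ≤ l2OpNorm (W (l+1)) * ‖netAct W (l+1) x - netAct W (l+1) x'‖ := mulVec_norm_le' _ _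
          _ ≤ l2OpNorm (W (l+1)) * ((∏ i ∈ Finset.range (l + 1), l2OpNorm (W i)) * ‖x - x'‖) :=
              mul_le_mul_of_nonneg_left hN (hWpos (l+1) (by omega)).le
          _ = (∏ i ∈ Finset.range (l + 1 + 1), l2OpNorm (W i)) * ‖x - x'‖ := by
              rw [Finset.prod_range_succ (fun i => l2OpNorm (W i)) (l + 1)]; ring
          _ < (∏ i ∈ Finset.range (l + 1 + 1), l2OpNorm (W i)) * r :=
              mul_lt_mul_of_pos_left hx' (hP _ (by omega))
          _ ≤ |(W (l+1)).mulVec (netAct W (l+1) x) k| := by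
              have := hrle (l+1) hl1 k; linarith
      have hnz := hx (l+1) hl1 k
      constructor
      · intro h'
        by_contra h0
        push_neg at h0
        have hneg : (W (l+1)).mulVec (netAct W (l+1) x) k < 0 := lt_of_le_of_ne h0 hnz
        rw [abs_of_neg hneg] at hcoordb
        rcases abs_lt.mp hcoordb with ⟨ha, hb⟩
        linarith
      · intro h'
        rw [abs_of_pos h'] at hcoordb
        rcases abs_lt.mp hcoordb with ⟨ha, hb⟩
        linarith
  constructor
  · intro l hl k
    exact (key l (by omega)).2.2 hl k
  · obtain ⟨hEq, -, -⟩ := key (L - 1) le_rfl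
    show (toE ((W (L-1)).mulVec (netAct W (L-1) x)) - toE ((W (L-1)).mulVec (netAct W (L-1) x'))).ofLp = _
    rw [toE_mulVec_sub, ← hEq]
    rfl


end
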